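/- Let Σ be a convex spacelike surface in R^{2,1}, and let γ(t) be a unit speed geodesic of Σ with γ(0) = p. Then for every t ≥ 0, the derivative of the extrinsic distance satisfies (d/dt) d_p(γ(t)) ≥ 1, where d_p(q) = sqrt(⟨q-p,q-p⟩). Consequently d_p(γ(t)) ≥ t. -/

import Mathlib

noncomputable section
open Real Set

/-- The Minkowski bilinear form on `ℝ^{2,1}`. -/
def mink (u v : ℝ × ℝ × ℝ) : ℝ := u.1 * v.1 + u.2.1 * v.2.1 - u.2.2 * v.2.2

lemma hasDerivAt_comps {γ : ℝ → ℝ × ℝ × ℝ} {d : ℝ × ℝ × ℝ} {t : ℝ} (h : HasDerivAt γ d t) :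
    HasDerivAt (fun s => (γ s).1) d.1 t ∧ HasDerivAt (fun s => (γ s).2.1) d.2.1 t ∧
      HasDerivAt (fun s => (γ s).2.2) d.2.2 t := by
  refine ⟨?_, ?_, ?_⟩
  · simpa using h.hasFDerivAt.fst.hasDerivAt
  · simpa using h.hasFDerivAt.snd.fst.hasDerivAt
  · simpa using h.hasFDerivAt.snd.snd.hasDerivAt

lemma hasDerivAt_mink_left {γ : ℝ → ℝ × ℝ × ℝ} {d : ℝ × ℝ × ℝ} {t : ℝ}
    (h : HasDerivAt γ d t) (v : ℝ × ℝ × ℝ) :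
    HasDerivAt (fun s => mink (γ s) v) (mink d v) t := by
  obtain ⟨h1, h2, h3⟩ := hasDerivAt_comps h
  exact ((h1.mul_const v.1).add (h2.mul_const v.2.1)).sub (h3.mul_const v.2.2)

lemma hasDerivAt_Q {γ : ℝ → ℝ × ℝ × ℝ} {d : ℝ × ℝ × ℝ} (p : ℝ × ℝ × ℝ) {t : ℝ}
    (h : HasDerivAt γ d t) :
    HasDerivAt (fun s => mink (γ s - p) (γ s - p)) (2 * mink d (γ t - p)) t := by
  obtain ⟨h1, h2, h3⟩ := hasDerivAt_comps h
  have h1' := h1.sub_const p.1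
  have h2' := h2.sub_const p.2.1
  have h3' := h3.sub_const p.2.2
  have := ((h1'.mul h1').add (h2'.mul h2')).sub (h3'.mul h3')
  have heq : (fun s => mink (γ s - p) (γ s - p)) = fun s =>
      ((γ s).1 - p.1) * ((γ s).1 - p.1) + ((γ s).2.1 - p.2.1) * ((γ s).2.1 - p.2.1)
        - ((γ s).2.2 - p.2.2) * ((γ s).2.2 - p.2.2) := by
    funext s; simp [mink]
  rw [heq]
  convert this using 1
  · rfl
  · rfl
  · rfl
  simp [mink]; ring

lemma key_geom (γ : ℝ → ℝ × ℝ × ℝ) (hγ : ContDiff ℝ 1 γ) (p : ℝ × ℝ × ℝ) (hp : γ 0 = p)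
    (hunit : ∀ t : ℝ, mink (deriv γ t) (deriv γ t) = 1)
    (hconc : ∀ v : ℝ × ℝ × ℝ, mink v v ≤ 0 → 0 ≤ v.2.2 →
      ConcaveOn ℝ univ (fun t => mink (γ t) v))
    {t : ℝ} (ht : 0 < t) (hQ : 0 < mink (γ t - p) (γ t - p)) :
    Real.sqrt (mink (γ t - p) (γ t - p)) ≤ mink (deriv γ t) (γ t - p) := by
  set d := deriv γ t with hd
  set u := γ t - p with hu
  set w : ℝ × ℝ × ℝ := u - t • d with hw
  -- step a: w is causal
  have hww : mink w w ≤ 0 := by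
    by_contra hcon
    push_neg at hcon
    set r : ℝ := Real.sqrt (w.1 ^ 2 + w.2.1 ^ 2) with hr
    have hsq : w.2.2 ^ 2 < w.1 ^ 2 + w.2.1 ^ 2 := by
      have : 0 < w.1 * w.1 + w.2.1 * w.2.1 - w.2.2 * w.2.2 := hcon
      nlinarith
    have habs : |w.2.2| < r := by
      rw [hr]
      calc |w.2.2| = Real.sqrt (w.2.2 ^ 2) := (Real.sqrt_sq_eq_abs _).symm
        _ < _ := Real.sqrt_lt_sqrt (sq_nonneg _) hsq
    have hrpos : 0 < r := lt_of_le_of_lt (abs_nonneg _) habs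
    have hr2 : r ^ 2 = w.1 ^ 2 + w.2.1 ^ 2 := Real.sq_sqrt (by positivity)
    set v : ℝ × ℝ × ℝ := (-w.1 / r, -w.2.1 / r, 1) with hv
    have hvv : mink v v ≤ 0 := by
      have : mink v v = (w.1 ^ 2 + w.2.1 ^ 2) / r ^ 2 - 1 := by
        simp only [mink, hv]; field_simp
      rw [this, ← hr2]
      simp [ne_of_gt hrpos]
    have hconcv := hconc v hvv (by norm_num [hv])
    have hder : HasDerivAt (fun s => mink (γ s) v) (mink d v) t :=
      hasDerivAt_mink_left ((hγ.differentiable one_ne_zero t).hasDerivAt) v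
    have hslope := hconcv.le_slope_of_hasDerivAt (mem_univ 0) (mem_univ t) ht hder
    rw [slope_def_field] at hslope
    have h0 : mink (γ 0) v = mink p v := by rw [hp]
    -- mink d v ≤ (mink (γ t) v - mink p v)/t, so 0 ≤ mink w v
    have hlin : mink (γ t) v - mink p v = mink u v := by
      simp only [mink, hu, Prod.fst_sub, Prod.snd_sub]; ring
    have hwv : 0 ≤ mink w v := by
      have h1 : mink d v ≤ (mink (γ t) v - mink p v) / t := by
        rw [h0] at hslope; convert hslope using 2; ring
      rw [hlin] at h1
      have h2 : t * mink d v ≤ mink u v := by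
        rw [div_eq_mul_inv] at h1
        have h3 := mul_le_mul_of_nonneg_left h1 ht.le
        rwa [mul_comm (mink u v) t⁻¹, ← mul_assoc, mul_inv_cancel₀ (ne_of_gt ht),
          one_mul] at h3
      have : mink w v = mink u v - t * mink d v := by
        simp only [mink, hw, Prod.fst_sub, Prod.snd_sub, Prod.smul_fst, Prod.smul_snd,
          smul_eq_mul]; ring
      linarith
    have hneg : mink w v < 0 := by
      have : mink w v = -r - w.2.2 := by
        simp only [mink, hv]
        field_simp
        nlinarith [hr2]
      rw [this]
      have := (abs_lt.mp habs).1
      linarith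
    linarith
  -- step b
  have hexp : mink w w = mink u u - 2 * t * mink d u + t ^ 2 * mink d d := by
    simp only [mink, hw, Prod.fst_sub, Prod.snd_sub, Prod.smul_fst, Prod.smul_snd, smul_eq_mul]
    ring
  have hdd : mink d d = 1 := hunit t
  have hdu : mink d u = mink d (γ t - p) := by rw [hu]
  have hs : Real.sqrt (mink u u) * Real.sqrt (mink u u) = mink u u :=
    Real.mul_self_sqrt hQ.le
  rw [hdd, hdu] at hexp
  have h2tm : mink u u + t ^ 2 ≤ 2 * t * mink d (γ t - p) := by linarith [hww, hexp]
  nlinarith [sq_nonneg (Real.sqrt (mink u u) - t), Real.sqrt_nonneg (mink u u)]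

lemma smul_mink (c : ℝ) (x : ℝ × ℝ × ℝ) : mink (c • x) (c • x) = c ^ 2 * mink x x := by
  simp only [mink, Prod.smul_fst, Prod.smul_snd, smul_eq_mul]; ring


/-- Let `γ` be a unit-speed geodesic of a convex spacelike surface in `ℝ^{2,1}` with
`γ(0) = p` (convexity being expressed by the concavity of `t ↦ ⟨γ(t), v⟩` for every
future-directed causal `v`), such that `γ(t) - p` is spacelike for `t > 0`. Then for every
`t ≥ 0` the (one-sided) derivative of `t ↦ d_p(γ(t)) = √⟨γ(t)-p, γ(t)-p⟩` is at least `1`;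
consequently `d_p(γ(t)) ≥ t`. -/
theorem stmt5 (γ : ℝ → ℝ × ℝ × ℝ) (hγ : ContDiff ℝ 1 γ) (p : ℝ × ℝ × ℝ) (hp : γ 0 = p)
    (hunit : ∀ t : ℝ, mink (deriv γ t) (deriv γ t) = 1)
    (hconc : ∀ v : ℝ × ℝ × ℝ, mink v v ≤ 0 → 0 ≤ v.2.2 →
      ConcaveOn ℝ univ (fun t => mink (γ t) v))
    (hspace : ∀ t : ℝ, 0 < t → 0 < mink (γ t - p) (γ t - p)) :
    (∀ t : ℝ, 0 ≤ t →
      1 ≤ derivWithin (fun t' => Real.sqrt (mink (γ t' - p) (γ t' - p))) (Ici 0) t) ∧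
    (∀ t : ℝ, 0 ≤ t → t ≤ Real.sqrt (mink (γ t - p) (γ t - p))) := by
  have hdiff := hγ.differentiable one_ne_zero
  set f : ℝ → ℝ := fun s => Real.sqrt (mink (γ s - p) (γ s - p)) with hf
  have hf0 : f 0 = 0 := by simp [hf, hp, mink]
  -- derivative at interior points
  have hderf : ∀ t : ℝ, 0 < t → HasDerivAt f
      (2 * mink (deriv γ t) (γ t - p) / (2 * Real.sqrt (mink (γ t - p) (γ t - p)))) t := by
    intro t ht
    exact (hasDerivAt_Q p (hdiff t).hasDerivAt).sqrt (ne_of_gt (hspace t ht))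
  have hge1 : ∀ t : ℝ, 0 < t →
      1 ≤ 2 * mink (deriv γ t) (γ t - p) / (2 * Real.sqrt (mink (γ t - p) (γ t - p))) := by
    intro t ht
    have hQt := hspace t ht
    have hkey := key_geom γ hγ p hp hunit hconc ht hQt
    have hsq : 0 < Real.sqrt (mink (γ t - p) (γ t - p)) := Real.sqrt_pos.mpr hQt
    rw [le_div_iff₀ (by positivity)]
    linarith
  -- one-sided derivative at 0 equals 1
  have hder0 : HasDerivWithinAt f 1 (Ici 0) 0 := by
    rw [hasDerivWithinAt_iff_tendsto_slope, Ici_sdiff_left]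
    have hγslope : Filter.Tendsto (slope γ 0) (nhdsWithin 0 (Ioi 0)) (nhds (deriv γ 0)) :=
      (hasDerivAt_iff_tendsto_slope.mp (hdiff 0).hasDerivAt).mono_left
        (nhdsWithin_mono _ (fun x hx => ne_of_gt hx))
    have hcont : Continuous fun x : ℝ × ℝ × ℝ => Real.sqrt (mink x x) := by
      apply Real.continuous_sqrt.comp
      simp only [mink]; fun_prop
    have h1 : Filter.Tendsto (fun s => Real.sqrt (mink (slope γ 0 s) (slope γ 0 s)))
        (nhdsWithin 0 (Ioi 0)) (nhds 1) := by
      have := (hcont.tendsto (deriv γ 0)).comp hγslope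
      rwa [hunit 0, Real.sqrt_one] at this
    apply h1.congr'
    filter_upwards [self_mem_nhdsWithin] with s hs
    have hs0 : (0 : ℝ) < s := hs
    have hsl : slope γ 0 s = s⁻¹ • (γ s - p) := by
      rw [slope_def_module, sub_zero, hp]
    rw [hsl, smul_mink, Real.sqrt_mul (by positivity),
      Real.sqrt_sq (by positivity), slope_def_field, hf0, sub_zero, sub_zero, div_eq_mul_inv]
    ring
  constructor
  · intro t ht
    rcases eq_or_lt_of_le ht with rfl | htpos
    · rw [hder0.derivWithin (uniqueDiffOn_Ici 0 0 self_mem_Ici)]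
    · rw [derivWithin_of_mem_nhds (Filter.mem_of_superset (Ioi_mem_nhds htpos)
        Ioi_subset_Ici_self), (hderf t htpos).deriv]
      exact hge1 t htpos
  · intro t ht
    have hQcont : Continuous fun s => mink (γ s - p) (γ s - p) := by
      have hc := hγ.continuous
      simp only [mink]; fun_prop
    have hfc : Continuous f := Real.continuous_sqrt.comp hQcont
    have hmono : MonotoneOn (fun s => f s - s) (Ici 0) := by
      apply monotoneOn_of_deriv_nonneg (convex_Ici 0) ((hfc.sub continuous_id).continuousOn)
      · intro x hx
        rw [interior_Ici] at hx
        exact (((hderf x hx).sub (hasDerivAt_id x)).differentiableAt).differentiableWithinAt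
      · intro x hx
        rw [interior_Ici] at hx
        rw [((hderf x hx).sub (hasDerivAt_id x)).deriv]
        have := hge1 x hx
        linarith
    have := hmono self_mem_Ici ht ht
    simp only [hf0, sub_zero] at this
    linarith
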